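/- Let r be a fixed integer and p a prime with p > B(r). Then the number of pairs (a, b) ∈ 𝔽_p × 𝔽_p with 4a³ + 27b² ≠ 0 such that the elliptic curve Y² = X³ + aX + b over 𝔽_p has exactly p + 1 − r rational points equals p·H_{r,p}/2 + O(p), where the implied constant is absolute. -/

import Mathlib

open scoped Classical

noncomputable section

/-- `Np p a b` is the number of `𝔽_p`-rational points of the curve `Y² = X³ + aX + b`
(affine points plus the point at infinity). -/
def Np (p : ℕ) (a b : ZMod p) : ℕ :=
  Nat.card {xy : ZMod p × ZMod p // xy.2 ^ 2 = xy.1 ^ 3 + a * xy.1 + b} + 1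

/-- The relation of `𝔽_p`-isomorphism between short Weierstrass curves `(a, b)`:
`(c, d)` is obtained from `(a, b)` by `(a, b) ↦ (m⁴a, m⁶b)` for some `m ≠ 0`. -/
def Isom (p : ℕ) (ab cd : ZMod p × ZMod p) : Prop :=
  ∃ m : ZMod p, m ≠ 0 ∧ cd.1 = m ^ 4 * ab.1 ∧ cd.2 = m ^ 6 * ab.2

/-- Pairs `(a,b)` defining an elliptic curve `Y² = X³ + aX + b` over `𝔽_p`
with exactly `p + 1 - r` rational points. -/
def Good (r : ℤ) (p : ℕ) : Set (ZMod p × ZMod p) :=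
  {ab | 4 * ab.1 ^ 3 + 27 * ab.2 ^ 2 ≠ 0 ∧ (Np p ab.1 ab.2 : ℤ) = (p : ℤ) + 1 - r}

/-- `H r p` = `H_{r,p}`: the number of `𝔽_p`-isomorphism classes of elliptic curves
over `𝔽_p` with exactly `p + 1 - r` rational points. -/
def H (r : ℤ) (p : ℕ) : ℕ :=
  Nat.card {C : Set (ZMod p × ZMod p) // ∃ ab ∈ Good r p,
    C = {cd | cd ∈ Good r p ∧ Isom p ab cd}}

/-- `B(r) = max {3, r, r²/4}`. -/
def Br (r : ℤ) : ℝ := max 3 (max (r : ℝ) ((r : ℝ) ^ 2 / 4))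

/-- `π_{1/2}(x) = ∫_2^x dt/(2√t log t)`. -/
def piHalf (x : ℝ) : ℝ := ∫ t in (2:ℝ)..x, 1 / (2 * Real.sqrt t * Real.log t)

/-- The Lang–Trotter constant `C_r`. -/
def Cconst (r : ℤ) : ℝ :=
  (2 / Real.pi) * ∏' ℓ : Nat.Primes,
    (if ((ℓ : ℕ) : ℤ) ∣ r then 1 - 1 / ((ℓ : ℕ) : ℝ) ^ 2
     else ((ℓ : ℕ) : ℝ) * (((ℓ : ℕ) : ℝ) ^ 2 - ((ℓ : ℕ) : ℝ) - 1) /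
       ((((ℓ : ℕ) : ℝ) - 1) * (((ℓ : ℕ) : ℝ) ^ 2 - 1)))

/-- `π_E^r(x)` for the curve `E(a,b) : y² = x³ + ax + b` with `a, b ∈ ℤ`:
the number of primes `p ≤ x` of good reduction with Frobenius trace `r`. -/
def piE (r : ℤ) (a b : ℤ) (x : ℝ) : ℕ :=
  Nat.card {p : ℕ // p.Prime ∧ (p : ℝ) ≤ x ∧ ¬ (p : ℤ) ∣ 6 * (4 * a ^ 3 + 27 * b ^ 2) ∧
    (Np p (a : ZMod p) (b : ZMod p) : ℤ) = (p : ℤ) + 1 - r}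

variable {p : ℕ} [Fact p.Prime]

lemma isom_refl (ab : ZMod p × ZMod p) : Isom p ab ab :=
  ⟨1, one_ne_zero, by simp, by simp⟩

lemma isom_symm {ab cd : ZMod p × ZMod p} (h : Isom p ab cd) : Isom p cd ab := by
  obtain ⟨m, hm, h1, h2⟩ := h
  refine ⟨m⁻¹, inv_ne_zero hm, ?_, ?_⟩
  · rw [h1]; field_simp
  · rw [h2]; field_simp

lemma isom_trans {ab cd ef : ZMod p × ZMod p} (h : Isom p ab cd) (h' : Isom p cd ef) :
    Isom p ab ef := by
  obtain ⟨m, hm, h1, h2⟩ := h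
  obtain ⟨n, hn, h3, h4⟩ := h'
  exact ⟨n * m, mul_ne_zero hn hm, by rw [h3, h1]; ring, by rw [h4, h2]; ring⟩

lemma Np_isom (a b m : ZMod p) (hm : m ≠ 0) :
    Np p a b = Np p (m ^ 4 * a) (m ^ 6 * b) := by
  unfold Np
  congr 1
  refine Nat.card_congr (Equiv.subtypeEquiv (Equiv.prodCongr
    (Equiv.mulLeft₀ (m ^ 2) (pow_ne_zero _ hm))
    (Equiv.mulLeft₀ (m ^ 3) (pow_ne_zero _ hm))) ?_)
  rintro ⟨x, y⟩
  simp only [Equiv.prodCongr_apply, Equiv.mulLeft₀_apply, Prod.map, Prod.fst, Prod.snd]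
  constructor
  · intro h; linear_combination (m ^ 6) * h
  · intro h
    apply mul_left_cancel₀ (pow_ne_zero 6 hm)
    linear_combination h

def cls (r : ℤ) (p : ℕ) (ab : ZMod p × ZMod p) : Set (ZMod p × ZMod p) :=
  {cd | cd ∈ Good r p ∧ Isom p ab cd}

def Cset (r : ℤ) (p : ℕ) : Set (Set (ZMod p × ZMod p)) :=
  {C | ∃ ab ∈ Good r p, C = cls r p ab}

variable {r : ℤ}

lemma good_isom {ab cd : ZMod p × ZMod p} (hab : ab ∈ Good r p) (h : Isom p ab cd) :
    cd ∈ Good r p := by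
  obtain ⟨m, hm, h1, h2⟩ := h
  obtain ⟨hd, hN⟩ := hab
  constructor
  · rw [h1, h2]
    intro h0
    apply hd
    apply mul_left_cancel₀ (pow_ne_zero 12 hm)
    rw [mul_zero]
    linear_combination h0
  · rw [h1, h2, ← Np_isom ab.1 ab.2 m hm]
    exact hN

lemma mem_cls_self {ab : ZMod p × ZMod p} (hab : ab ∈ Good r p) : ab ∈ cls r p ab :=
  ⟨hab, isom_refl ab⟩

lemma cls_eq_of_mem {ab cd : ZMod p × ZMod p} (h : cd ∈ cls r p ab) :
    cls r p ab = cls r p cd := by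
  obtain ⟨hcd, hi⟩ := h
  ext x
  exact ⟨fun hx => ⟨hx.1, isom_trans (isom_symm hi) hx.2⟩,
    fun hx => ⟨hx.1, isom_trans hi hx.2⟩⟩

lemma cls_sat {ab : ZMod p × ZMod p} (hab : ab ∈ Good r p) :
    cls r p ab = {cd | Isom p ab cd} :=
  Set.ext fun cd => ⟨fun h => h.2, fun h => ⟨good_isom hab h, h⟩⟩

open Finset Polynomial in
lemma orbit_eq_image (a b : ZMod p) :
    {cd | Isom p (a, b) cd} =
      ↑((Finset.univ.erase (0 : ZMod p)).image fun m => (m ^ 4 * a, m ^ 6 * b)) := by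
  ext ⟨c, d⟩
  simp only [Set.mem_setOf_eq, Isom, Finset.coe_image, Set.mem_image, Finset.coe_erase,
    Finset.coe_univ, Set.mem_diff, Set.mem_univ, true_and, Set.mem_singleton_iff,
    Prod.mk.injEq]
  constructor
  · rintro ⟨m, hm, h1, h2⟩; exact ⟨m, hm, h1.symm, h2.symm⟩
  · rintro ⟨m, hm, h1, h2⟩; exact ⟨m, hm, h1.symm, h2.symm⟩

open Finset Polynomial in
lemma fiber_card_le (a b : ZMod p) (hab : a ≠ 0 ∨ b ≠ 0) (m₀ : ZMod p) (hm₀ : m₀ ≠ 0) :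
    ((Finset.univ.erase (0 : ZMod p)).filter
      (fun m => (m ^ 4 * a, m ^ 6 * b) = (m₀ ^ 4 * a, m₀ ^ 6 * b))).card ≤ 12 := by
  classical
  have hP : (X ^ 12 - C (m₀ ^ 12) : (ZMod p)[X]) ≠ 0 :=
    X_pow_sub_C_ne_zero (by norm_num) _
  have hsub : ((Finset.univ.erase (0 : ZMod p)).filter
      (fun m => (m ^ 4 * a, m ^ 6 * b) = (m₀ ^ 4 * a, m₀ ^ 6 * b))) ⊆
      (X ^ 12 - C (m₀ ^ 12) : (ZMod p)[X]).roots.toFinset := by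
    intro m hm
    rw [Finset.mem_filter] at hm
    obtain ⟨hmD, heq⟩ := hm
    rw [Prod.mk.injEq] at heq
    have h12 : m ^ 12 = m₀ ^ 12 := by
      rcases hab with ha | hb
      · have h4 : m ^ 4 = m₀ ^ 4 := mul_right_cancel₀ ha heq.1
        calc m ^ 12 = (m ^ 4) ^ 3 := by ring
        _ = (m₀ ^ 4) ^ 3 := by rw [h4]
        _ = m₀ ^ 12 := by ring
      · have h6 : m ^ 6 = m₀ ^ 6 := mul_right_cancel₀ hb heq.2
        calc m ^ 12 = (m ^ 6) ^ 2 := by ring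
        _ = (m₀ ^ 6) ^ 2 := by rw [h6]
        _ = m₀ ^ 12 := by ring
    rw [Multiset.mem_toFinset, mem_roots hP]
    simp [IsRoot, h12]
  calc _ ≤ (X ^ 12 - C (m₀ ^ 12) : (ZMod p)[X]).roots.toFinset.card :=
        Finset.card_le_card hsub
    _ ≤ Multiset.card (X ^ 12 - C (m₀ ^ 12) : (ZMod p)[X]).roots :=
        Multiset.toFinset_card_le _
    _ ≤ (X ^ 12 - C (m₀ ^ 12) : (ZMod p)[X]).natDegree := card_roots' _
    _ = 12 := natDegree_X_pow_sub_C

open Finset in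
lemma card_orbit_lower (a b : ZMod p) (hab : a ≠ 0 ∨ b ≠ 0) :
    p - 1 ≤ 12 * ((Finset.univ.erase (0 : ZMod p)).image
      fun m => (m ^ 4 * a, m ^ 6 * b)).card := by
  classical
  have hD : (Finset.univ.erase (0 : ZMod p)).card = p - 1 := by
    rw [Finset.card_erase_of_mem (Finset.mem_univ _), Finset.card_univ, ZMod.card]
  rw [← hD]
  apply Finset.card_le_mul_card_image
  intro cd hcd
  rw [Finset.mem_image] at hcd
  obtain ⟨m₀, hm₀D, rfl⟩ := hcd
  have hm₀ : m₀ ≠ 0 := (Finset.mem_erase.mp hm₀D).1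
  exact fiber_card_le a b hab m₀ hm₀

open Finset in
lemma two_mul_card_orbit (hp3 : 3 < p) (a b : ZMod p) (ha : a ≠ 0) (hb : b ≠ 0) :
    2 * ((Finset.univ.erase (0 : ZMod p)).image
      fun m => (m ^ 4 * a, m ^ 6 * b)).card = p - 1 := by
  classical
  have htwo : (2 : ZMod p) ≠ 0 := by
    have : ((2 : ℕ) : ZMod p) ≠ 0 := by
      rw [Ne, ZMod.natCast_eq_zero_iff]
      intro hdvd
      have := Nat.le_of_dvd (by norm_num) hdvd
      omega
    simpa using this
  have hD : (Finset.univ.erase (0 : ZMod p)).card = p - 1 := by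
    rw [Finset.card_erase_of_mem (Finset.mem_univ _), Finset.card_univ, ZMod.card]
  set D := Finset.univ.erase (0 : ZMod p) with hDdef
  set f : ZMod p → ZMod p × ZMod p := fun m => (m ^ 4 * a, m ^ 6 * b) with hfdef
  have key : ∀ cd ∈ D.image f, (D.filter fun m => f m = cd).card = 2 := by
    intro cd hcd
    rw [Finset.mem_image] at hcd
    obtain ⟨m₀, hm₀D, rfl⟩ := hcd
    have hm₀ : m₀ ≠ 0 := (Finset.mem_erase.mp hm₀D).1
    have hne : m₀ ≠ -m₀ := by
      intro h
      apply hm₀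
      have h2 : 2 * m₀ = 0 := by linear_combination h
      exact (mul_eq_zero.mp h2).resolve_left htwo
    have hset : (D.filter fun m => f m = f m₀) = {m₀, -m₀} := by
      ext m
      simp only [Finset.mem_filter, Finset.mem_insert, Finset.mem_singleton, hDdef,
        Finset.mem_erase, Finset.mem_univ, and_true]
      constructor
      · rintro ⟨hm, heq⟩
        rw [hfdef] at heq
        simp only [Prod.mk.injEq] at heq
        have h4 : m ^ 4 = m₀ ^ 4 := mul_right_cancel₀ ha heq.1
        have h6 : m ^ 6 = m₀ ^ 6 := mul_right_cancel₀ hb heq.2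
        have h2 : m ^ 2 = m₀ ^ 2 := by
          apply mul_left_cancel₀ (pow_ne_zero 4 hm₀)
          calc m₀ ^ 4 * m ^ 2 = m ^ 4 * m ^ 2 := by rw [h4]
            _ = m ^ 6 := by ring
            _ = m₀ ^ 6 := h6
            _ = m₀ ^ 4 * m₀ ^ 2 := by ring
        have : (m - m₀) * (m + m₀) = 0 := by linear_combination h2
        rcases mul_eq_zero.mp this with h | h
        · left; linear_combination h
        · right; linear_combination h
      · rintro (rfl | rfl)
        · exact ⟨hm₀, rfl⟩
        · refine ⟨neg_ne_zero.mpr hm₀, ?_⟩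
          rw [hfdef]
          simp only [Prod.mk.injEq]
          constructor <;> ring_nf <;> rfl
    rw [hset, Finset.card_insert_of_notMem (by simpa using hne), Finset.card_singleton]
  have := Finset.card_eq_sum_card_fiberwise
    (fun m hm => Finset.mem_image_of_mem f hm : ∀ m ∈ D, f m ∈ D.image f)
  rw [hD] at this
  rw [this, Finset.sum_congr rfl key, Finset.sum_const, smul_eq_mul, mul_comm]


/-- **(7) in Baier / David–Pappalardi.** For a fixed integer `r` and a prime `p > B(r)`,
the number of pairs `(a, b) ∈ 𝔽_p × 𝔽_p` with `4a³ + 27b² ≠ 0` such that the elliptic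
curve `Y² = X³ + aX + b` has exactly `p + 1 - r` points equals `p H_{r,p}/2 + O(p)` with
an absolute implied constant. -/
theorem count_curves_with_trace :
    ∃ K : ℝ, 0 < K ∧ ∀ r : ℤ, ∀ p : ℕ, p.Prime → Br r < p →
      |(Nat.card {ab : ZMod p × ZMod p // 4 * ab.1 ^ 3 + 27 * ab.2 ^ 2 ≠ 0 ∧
          (Np p ab.1 ab.2 : ℤ) = (p : ℤ) + 1 - r} : ℝ) -
        (p : ℝ) * (H r p) / 2| ≤ K * p := by
  classical
  refine ⟨50, by norm_num, ?_⟩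
  intro r p hpP hBr
  haveI : Fact p.Prime := ⟨hpP⟩
  have hp3 : 3 < p := by
    have h : (3 : ℝ) < p := lt_of_le_of_lt (le_max_left _ _) hBr
    exact_mod_cast h
  haveI : NeZero p := ⟨by omega⟩
  have hGf : (Good r p).Finite := Set.toFinite _
  have hCf : (Cset r p).Finite := Set.toFinite _
  set s : Finset (ZMod p × ZMod p) := hGf.toFinset with hs
  set t : Finset (Set (ZMod p × ZMod p)) := hCf.toFinset with ht
  -- cardinal identifications
  have hN : (Nat.card {ab : ZMod p × ZMod p // 4 * ab.1 ^ 3 + 27 * ab.2 ^ 2 ≠ 0 ∧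
      (Np p ab.1 ab.2 : ℤ) = (p : ℤ) + 1 - r}) = s.card := by
    have : Nat.card ↥(Good r p) = s.card := by
      rw [Nat.card_coe_set_eq, Set.ncard_eq_toFinset_card _ hGf]
    exact this
  have hH : H r p = t.card := by
    have : Nat.card ↥(Cset r p) = t.card := by
      rw [Nat.card_coe_set_eq, Set.ncard_eq_toFinset_card _ hCf]
    exact this
  -- membership lemmas
  have hmem_s : ∀ x, x ∈ s ↔ x ∈ Good r p := fun x => hGf.mem_toFinset
  have hmem_t : ∀ C, C ∈ t ↔ C ∈ Cset r p := fun C => hCf.mem_toFinset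
  -- partition of s into classes
  have hpart : s.card = ∑ C ∈ t, (s.filter fun x => cls r p x = C).card := by
    apply Finset.card_eq_sum_card_fiberwise
    intro x hx
    rw [Finset.mem_coe, hmem_t]
    exact ⟨x, (hmem_s x).1 hx, rfl⟩
  set cc : Set (ZMod p × ZMod p) → ℕ := fun C => (C.toFinite.toFinset).card with hcc
  have hfil : ∀ C ∈ t, (s.filter fun x => cls r p x = C) = C.toFinite.toFinset := by
    intro C hC
    obtain ⟨ab, hab, rfl⟩ := (hmem_t C).1 hC
    ext x
    simp only [Finset.mem_filter, Set.Finite.mem_toFinset, hmem_s]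
    constructor
    · rintro ⟨hx, h⟩; rw [← h]; exact mem_cls_self hx
    · intro hx
      exact ⟨hx.1, (cls_eq_of_mem hx).symm⟩
  have hsum : s.card = ∑ C ∈ t, cc C := by
    rw [hpart]; exact Finset.sum_congr rfl fun C hC => by rw [hfil C hC]
  -- the class of ab is the image finset
  have horb : ∀ ab ∈ Good r p, (cls r p ab).toFinite.toFinset
      = ((Finset.univ.erase (0 : ZMod p)).image
          fun m => (m ^ 4 * ab.1, m ^ 6 * ab.2)) := by
    intro ab hab
    ext x
    rw [Set.Finite.mem_toFinset, cls_sat hab,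
      show ab = (ab.1, ab.2) from rfl, orbit_eq_image ab.1 ab.2]
    simp
  have hrep : ∀ ab ∈ Good r p, ab.1 ≠ 0 ∨ ab.2 ≠ 0 := by
    intro ab hab
    by_contra hcon
    push_neg at hcon
    exact hab.1 (by rw [hcon.1, hcon.2]; ring)
  set spec : Set (ZMod p × ZMod p) → Prop := fun C => ∃ x ∈ C, x.1 = 0 ∨ x.2 = 0 with hspec
  -- lower bound for every class
  have fact1 : ∀ C ∈ t, p - 1 ≤ 12 * cc C := by
    intro C hC
    obtain ⟨ab, hab, rfl⟩ := (hmem_t C).1 hC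
    show p - 1 ≤ 12 * ((cls r p ab).toFinite.toFinset).card
    rw [horb ab hab]
    exact card_orbit_lower ab.1 ab.2 (hrep ab hab)
  -- exact count for generic classes
  have fact2 : ∀ C ∈ t, ¬ spec C → 2 * cc C = p - 1 := by
    intro C hC hnspec
    obtain ⟨ab, hab, rfl⟩ := (hmem_t C).1 hC
    show 2 * ((cls r p ab).toFinite.toFinset).card = p - 1
    rw [horb ab hab]
    exact two_mul_card_orbit hp3 ab.1 ab.2
      (fun h0 => hnspec ⟨ab, mem_cls_self hab, Or.inl h0⟩)
      (fun h0 => hnspec ⟨ab, mem_cls_self hab, Or.inr h0⟩)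
  -- special classes lie on the coordinate cross
  have hlineA : ∀ C ∈ t, spec C → ∀ y ∈ C, y.1 = 0 ∨ y.2 = 0 := by
    intro C hC hspecC y hy
    obtain ⟨ab, hab, rfl⟩ := (hmem_t C).1 hC
    obtain ⟨x₀, hx₀C, hx₀⟩ := hspecC
    rw [cls_eq_of_mem hx₀C] at hy
    obtain ⟨m, hm, h1, h2⟩ := hy.2
    rcases hx₀ with h | h
    · left; rw [h1, h, mul_zero]
    · right; rw [h2, h, mul_zero]
  -- distinct classes are disjoint
  have hdisj : ∀ C ∈ t, ∀ C' ∈ t, C ≠ C' →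
      Disjoint (C.toFinite.toFinset) (C'.toFinite.toFinset) := by
    intro C hC C' hC' hne
    rw [Finset.disjoint_left]
    intro x hx hx'
    apply hne
    obtain ⟨ab, hab, h1⟩ := (hmem_t C).1 hC
    obtain ⟨ab', hab', h2⟩ := (hmem_t C').1 hC'
    subst h1; subst h2
    rw [Set.Finite.mem_toFinset] at hx hx'
    rw [cls_eq_of_mem hx, cls_eq_of_mem hx']
  -- sum of special class sizes is at most 2p
  have hsum2 : ∑ C ∈ t.filter spec, cc C ≤ 2 * p := by
    rw [← Finset.card_biUnion (fun C hC C' hC' hne =>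
      hdisj C (Finset.filter_subset _ _ hC) C' (Finset.filter_subset _ _ hC') hne)]
    have hsubset : ((t.filter spec).biUnion fun C => C.toFinite.toFinset) ⊆
        (({0} : Finset (ZMod p)) ×ˢ Finset.univ) ∪ (Finset.univ ×ˢ ({0} : Finset (ZMod p))) := by
      intro y hy
      rw [Finset.mem_biUnion] at hy
      obtain ⟨C, hC, hyC⟩ := hy
      rw [Set.Finite.mem_toFinset] at hyC
      have := hlineA C (Finset.filter_subset _ _ hC) (Finset.mem_filter.mp hC).2 y hyC
      rw [Finset.mem_union, Finset.mem_product, Finset.mem_product]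
      rcases this with h | h
      · left; exact ⟨by simp [h], Finset.mem_univ _⟩
      · right; exact ⟨Finset.mem_univ _, by simp [h]⟩
    calc ((t.filter spec).biUnion fun C => C.toFinite.toFinset).card
        ≤ _ := Finset.card_le_card hsubset
      _ ≤ (({0} : Finset (ZMod p)) ×ˢ (Finset.univ : Finset (ZMod p))).card
          + ((Finset.univ : Finset (ZMod p)) ×ˢ ({0} : Finset (ZMod p))).card :=
            Finset.card_union_le _ _
      _ ≤ 2 * p := by
          rw [Finset.card_product, Finset.card_product, Finset.card_singleton,
            Finset.card_univ, ZMod.card]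
          omega
  -- number of special classes is at most 48
  have ht2card : (t.filter spec).card ≤ 48 := by
    have h1 : (t.filter spec).card * (p - 1) ≤ 48 * (p - 1) := by
      calc (t.filter spec).card * (p - 1)
          = ∑ _C ∈ t.filter spec, (p - 1) := by rw [Finset.sum_const, smul_eq_mul]
        _ ≤ ∑ C ∈ t.filter spec, 12 * cc C :=
            Finset.sum_le_sum fun C hC => fact1 C (Finset.filter_subset _ _ hC)
        _ = 12 * ∑ C ∈ t.filter spec, cc C := (Finset.mul_sum _ _ _).symm
        _ ≤ 12 * (2 * p) := Nat.mul_le_mul_left _ hsum2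
        _ ≤ 48 * (p - 1) := by omega
    exact Nat.le_of_mul_le_mul_right h1 (by omega)
  have htcard : t.card ≤ 24 * p := by
    have hscard : s.card ≤ p * p := by
      calc s.card ≤ Fintype.card (ZMod p × ZMod p) := Finset.card_le_univ _
        _ = p * p := by rw [Fintype.card_prod, ZMod.card]
    have h1 : t.card * (p - 1) ≤ (24 * p) * (p - 1) := by
      calc t.card * (p - 1)
          = ∑ _C ∈ t, (p - 1) := by rw [Finset.sum_const, smul_eq_mul]
        _ ≤ ∑ C ∈ t, 12 * cc C := Finset.sum_le_sum fun C hC => fact1 C hC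
        _ = 12 * ∑ C ∈ t, cc C := (Finset.mul_sum _ _ _).symm
        _ = 12 * s.card := by rw [← hsum]
        _ ≤ 12 * (p * p) := Nat.mul_le_mul_left _ hscard
        _ ≤ (24 * p) * (p - 1) := by
            obtain ⟨q, rfl⟩ : ∃ q, p = q + 1 := ⟨p - 1, by omega⟩
            simp only [Nat.add_sub_cancel]
            nlinarith [hp3]
    exact Nat.le_of_mul_le_mul_right h1 (by omega)
  -- final real estimate
  rw [hN, hH]
  have hpR1 : (1:ℝ) ≤ (p:ℝ) := by exact_mod_cast (by omega : 1 ≤ p)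
  have hccR : ∀ C ∈ t, ¬ spec C → (cc C : ℝ) = ((p:ℝ) - 1) / 2 := by
    intro C hC hn
    have h := fact2 C hC hn
    have h2 : ((2 * cc C : ℕ) : ℝ) = ((p - 1 : ℕ) : ℝ) := by exact_mod_cast congrArg Nat.cast h
    push_cast [Nat.cast_sub (by omega : 1 ≤ p)] at h2
    linarith
  have key : (s.card : ℝ) - (p:ℝ) * t.card / 2 = ∑ C ∈ t, ((cc C : ℝ) - (p:ℝ)/2) := by
    rw [Finset.sum_sub_distrib, Finset.sum_const, hsum]
    push_cast
    ring
  rw [key]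
  have hsplit : ∑ C ∈ t, |(cc C : ℝ) - (p:ℝ)/2| =
      (∑ C ∈ t.filter spec, |(cc C : ℝ) - (p:ℝ)/2|)
      + ∑ C ∈ t.filter (fun C => ¬ spec C), |(cc C : ℝ) - (p:ℝ)/2| :=
    by rw [Finset.sum_filter_add_sum_filter_not t spec]
  have hb1 : ∑ C ∈ t.filter (fun C => ¬ spec C), |(cc C : ℝ) - (p:ℝ)/2| ≤ 12 * p := by
    calc ∑ C ∈ t.filter (fun C => ¬ spec C), |(cc C : ℝ) - (p:ℝ)/2|
        = ∑ _C ∈ t.filter (fun C => ¬ spec C), (1/2 : ℝ) := by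
          apply Finset.sum_congr rfl
          intro C hC
          rw [Finset.mem_filter] at hC
          rw [hccR C hC.1 hC.2,
            show ((p:ℝ)-1)/2 - (p:ℝ)/2 = -(1/2) by ring, abs_neg]
          norm_num
      _ = ((t.filter (fun C => ¬ spec C)).card : ℝ) * (1/2 : ℝ) := by
          rw [Finset.sum_const, nsmul_eq_mul]
      _ ≤ (24 * (p:ℝ)) * (1/2 : ℝ) := by
          have h0 := le_trans (Finset.card_le_card (Finset.filter_subset (fun C => ¬ spec C) t)) htcard
          have h' : ((t.filter fun C => ¬ spec C).card : ℝ) ≤ 24 * (p:ℝ) := by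
            exact_mod_cast h0
          nlinarith
      _ ≤ 12 * p := by linarith
  have hb2 : ∑ C ∈ t.filter spec, |(cc C : ℝ) - (p:ℝ)/2| ≤ 26 * p := by
    have habs : ∀ C ∈ t.filter spec, |(cc C : ℝ) - (p:ℝ)/2| ≤ (cc C : ℝ) + (p:ℝ)/2 := by
      intro C _
      have hc : (0:ℝ) ≤ (cc C : ℝ) := Nat.cast_nonneg _
      have hp0 : (0:ℝ) ≤ (p:ℝ)/2 := by positivity
      rw [abs_le]
      constructor <;> linarith
    calc ∑ C ∈ t.filter spec, |(cc C : ℝ) - (p:ℝ)/2|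
        ≤ ∑ C ∈ t.filter spec, ((cc C:ℝ) + (p:ℝ)/2) := Finset.sum_le_sum habs
      _ = (∑ C ∈ t.filter spec, (cc C:ℝ)) + ((t.filter spec).card : ℝ) * ((p:ℝ)/2) := by
          rw [Finset.sum_add_distrib, Finset.sum_const, nsmul_eq_mul]
      _ ≤ 2 * (p:ℝ) + 48 * ((p:ℝ)/2) := by
          have h1 : (∑ C ∈ t.filter spec, (cc C:ℝ)) ≤ 2 * (p:ℝ) := by
            have h1' := (Nat.cast_le (α := ℝ)).mpr hsum2
            push_cast at h1'
            exact h1'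
          have h2 : ((t.filter spec).card : ℝ) ≤ 48 := by exact_mod_cast ht2card
          have hp0 : (0:ℝ) ≤ (p:ℝ)/2 := by positivity
          nlinarith
      _ ≤ 26 * p := by linarith
  calc |∑ C ∈ t, ((cc C : ℝ) - (p:ℝ)/2)| ≤ ∑ C ∈ t, |(cc C : ℝ) - (p:ℝ)/2| :=
      Finset.abs_sum_le_sum_abs _ _
    _ = _ := hsplit
    _ ≤ 26 * p + 12 * p := add_le_add hb2 hb1
    _ ≤ 50 * p := by linarith
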